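/- Let H be a real inner product space, λ > 0, τ, J, τ̃ ∈ H, and let p, q, A, B be real numbers with p ≥ 0, A ≥ 0, B ≥ 0. Assume ‖τ̃ − J‖ ≤ A·(1 + p^{1/2}) and q − p ≤ B·(1 + p). Set E := (1/(2λ))‖τ − J‖² + p. Then (1/(2λ))‖τ − τ̃‖² + q − E ≤ (‖τ − J‖/λ)·A·(1 + E^{1/2}) + (A²/λ)·(1 + E) + B·(1 + E). -/
import Mathlib


/-- The Moreau–Yosida envelope comparison estimate from the proof of Proposition 3.2:
with `E = (1/(2λ))‖τ − J‖² + p`, if `‖τ̃ − J‖ ≤ A(1 + √p)` and `q − p ≤ B(1 + p)`, then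
`(1/(2λ))‖τ − τ̃‖² + q − E ≤ (‖τ − J‖/λ)A(1 + √E) + (A²/λ)(1 + E) + B(1 + E)`. -/
theorem moreau_yosida_envelope_estimate {H : Type*} [NormedAddCommGroup H]
    [InnerProductSpace ℝ H] (lam : ℝ) (hlam : 0 < lam)
    (τ J τtilde : H) (p q A B : ℝ) (hp : 0 ≤ p) (hA : 0 ≤ A) (hB : 0 ≤ B)
    (h1 : ‖τtilde - J‖ ≤ A * (1 + Real.sqrt p))
    (h2 : q - p ≤ B * (1 + p))
    (E : ℝ) (hE : E = 1 / (2 * lam) * ‖τ - J‖ ^ 2 + p) :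
    1 / (2 * lam) * ‖τ - τtilde‖ ^ 2 + q - E ≤
      ‖τ - J‖ / lam * A * (1 + Real.sqrt E) + A ^ 2 / lam * (1 + E) + B * (1 + E) := by
  have hr : (0:ℝ) ≤ ‖τ - J‖ := norm_nonneg _
  have ha : (0:ℝ) ≤ ‖τtilde - J‖ := norm_nonneg _
  have hc0 : (0:ℝ) < 1 / lam := by positivity
  have htri : ‖τ - τtilde‖ ≤ ‖τ - J‖ + ‖τtilde - J‖ := by
    calc ‖τ - τtilde‖ = ‖(τ - J) - (τtilde - J)‖ := by rw [sub_sub_sub_cancel_right]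
    _ ≤ ‖τ - J‖ + ‖τtilde - J‖ := norm_sub_le _ _
  have hsq2 : ‖τ - τtilde‖ ^ 2 ≤ (‖τ - J‖ + ‖τtilde - J‖) ^ 2 := by
    nlinarith [norm_nonneg (τ - τtilde)]
  have hpE : p ≤ E := by
    have : 0 ≤ 1 / (2 * lam) * ‖τ - J‖ ^ 2 := by positivity
    linarith [hE ▸ le_refl E]
  have hsp : 0 ≤ Real.sqrt p := Real.sqrt_nonneg _
  have hsE : 0 ≤ Real.sqrt E := Real.sqrt_nonneg _
  have hsqle : Real.sqrt p ≤ Real.sqrt E := Real.sqrt_le_sqrt hpE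
  have hpp : Real.sqrt p ^ 2 = p := Real.sq_sqrt hp
  have h2sp : 2 * Real.sqrt p ≤ 1 + p := by nlinarith [sq_nonneg (Real.sqrt p - 1)]
  -- a ≤ A (1 + √E)
  have ha' : ‖τtilde - J‖ ≤ A * (1 + Real.sqrt E) := by nlinarith
  -- a² ≤ 2 A² (1 + E)
  have ha2 : ‖τtilde - J‖ ^ 2 ≤ 2 * A ^ 2 * (1 + E) := by nlinarith
  -- q - p ≤ B (1 + E)
  have hqp : q - p ≤ B * (1 + E) := by nlinarith
  have hrw1 : 1 / (2 * lam) = (1 / lam) / 2 := by rw [div_div]; ring_nf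
  have hrw2 : ‖τ - J‖ / lam = ‖τ - J‖ * (1 / lam) := by ring
  have hrw3 : A ^ 2 / lam = A ^ 2 * (1 / lam) := by ring
  rw [hrw1, hrw2, hrw3] at *
  set c := 1 / lam with hc
  have hE' : E = c / 2 * ‖τ - J‖ ^ 2 + p := by rw [hE, hc]; ring
  have key1 : 0 ≤ c * ‖τ - J‖ * (A * (1 + Real.sqrt E) - ‖τtilde - J‖) :=
    mul_nonneg (mul_nonneg hc0.le hr) (by linarith)
  have key2 : 0 ≤ c * (2 * A ^ 2 * (1 + E) - ‖τtilde - J‖ ^ 2) :=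
    mul_nonneg hc0.le (by linarith)
  nlinarith [key1, key2, hqp, hsq2, hE', mul_nonneg (mul_nonneg hc0.le hr) ha]
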